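/- arXiv:2507.00704 — 2 statements merged into one kernel-verified Lean document; each statement's English description precedes it below -/
import Mathlib

section
/- For every real u and every γ > 1/2, the series Σ_{q≥1} H_q(u)^2 / (q! · q^γ) converges; conversely, if the series Σ_{q≥1} H_q(u)^2 / (q! · q^γ) converges for some real u then γ > 1/2. -/
noncomputable def H : ℕ → ℝ → ℝ
  | 0, _ => 1
  | 1, x => x
  | (q + 2), x => x * H (q + 1) x - (q + 1) * H q x

namespace HW

noncomputable def a (u : ℝ) (q : ℕ) : ℝ := H q u ^ 2 / (Nat.factorial q : ℝ)

noncomputable def S (u : ℝ) (n : ℕ) : ℝ := ∑ q ∈ Finset.range (n + 1), a u q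

lemma a_nonneg (u : ℝ) (q : ℕ) : 0 ≤ a u q := by
  apply div_nonneg (sq_nonneg _) (by positivity)

lemma S_succ (u : ℝ) (n : ℕ) : S u (n + 1) = S u n + a u (n + 1) := by
  simp [S, Finset.sum_range_succ]

lemma one_le_S (u : ℝ) (n : ℕ) : 1 ≤ S u n := by
  induction n with
  | zero => simp [S, a, H]
  | succ n ih => rw [S_succ]; nlinarith [a_nonneg u (n+1)]

lemma S_pos (u : ℝ) (n : ℕ) : 0 < S u n := lt_of_lt_of_le one_pos (one_le_S u n)

lemma S_mono (u : ℝ) {m n : ℕ} (h : m ≤ n) : S u m ≤ S u n := by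
  induction n with
  | zero => simp_all
  | succ n ih =>
    rcases Nat.lt_or_ge m (n+1) with h'|h'
    · have := ih (Nat.lt_succ_iff.mp h')
      rw [S_succ]; nlinarith [a_nonneg u (n+1)]
    · have : m = n + 1 := le_antisymm h h'
      simp [this]

lemma CD (u : ℝ) (n : ℕ) : (Nat.factorial (n+1) : ℝ) * S u (n + 1) =
    (n + 2) * H (n+1) u ^ 2 + (n + 1) ^ 2 * H n u ^ 2
      - (n + 1) * u * H (n+1) u * H n u := by
  induction n with
  | zero =>
    simp [S, a, H, Finset.sum_range_succ]
    ring
  | succ n ih =>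
    have hfac : (Nat.factorial (n+2) : ℝ) = (n + 2) * Nat.factorial (n+1) := by
      push_cast [Nat.factorial_succ]; ring
    have hrec : H (n+2) u = u * H (n+1) u - (n + 1) * H n u := by
      simp [H]
    have hS : S u (n+2) = S u (n+1) + H (n+2) u ^ 2 / (Nat.factorial (n+2) : ℝ) := by
      rw [S_succ]; rfl
    have hfpos : (0:ℝ) < (Nat.factorial (n+2) : ℝ) := by positivity
    rw [hS, mul_add, hfac, mul_assoc _ _ (S u (n+1)), ih, hrec]
    have hne : ((n:ℝ) + 2) * (Nat.factorial (n+1) : ℝ) ≠ 0 := by positivity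
    field_simp
    push_cast
    ring

lemma fac_succ_real (n : ℕ) : (Nat.factorial (n+1) : ℝ) = ((n:ℝ)+1) * (Nat.factorial n : ℝ) := by
  push_cast [Nat.factorial_succ]; ring

lemma T_mul_fac (u : ℝ) (n : ℕ) : (Nat.factorial (n+1) : ℝ) * (a u (n+1) + a u n)
    = H (n+1) u ^ 2 + ((n:ℝ)+1) * H n u ^ 2 := by
  have h0 : (Nat.factorial n : ℝ) ≠ 0 := by positivity
  have h1 : (Nat.factorial (n+1) : ℝ) ≠ 0 := by positivity
  rw [a, a, mul_add, mul_div_cancel₀ _ h1, fac_succ_real]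
  field_simp

lemma sqrt_sq' (n : ℕ) : Real.sqrt ((n:ℝ)+1) ^ 2 = (n:ℝ)+1 := by
  rw [Real.sq_sqrt]; positivity

lemma key_upper (u : ℝ) (n : ℕ) :
    S u (n+1) ≤ ((n:ℝ) + 2 + |u| * Real.sqrt ((n:ℝ)+1) / 2) * (a u (n+1) + a u n) := by
  have hF : (0:ℝ) < (Nat.factorial (n+1) : ℝ) := by positivity
  rw [← mul_le_mul_iff_of_pos_left hF, CD, mul_left_comm, T_mul_fac]
  set A := H (n+1) u
  set B := H n u
  set s := Real.sqrt ((n:ℝ)+1) with hs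
  have hs2 : s ^ 2 = (n:ℝ)+1 := sqrt_sq' n
  have hs0 : (0:ℝ) ≤ s := Real.sqrt_nonneg _
  have hu0 : (0:ℝ) ≤ |u| := abs_nonneg u
  have hA : |A| ^ 2 = A ^ 2 := sq_abs A
  have hB : |B| ^ 2 = B ^ 2 := sq_abs B
  have hAB : -(u * A * B) ≤ |u| * |A| * |B| := by
    rw [show |u| * |A| * |B| = |u * A * B| by rw [abs_mul, abs_mul]]
    exact neg_le_of_neg_le (neg_abs_le _)
  have h1 : ((n:ℝ)+1) * (-(u * A * B)) ≤ ((n:ℝ)+1) * (|u| * |A| * |B|) :=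
    mul_le_mul_of_nonneg_left hAB (by positivity)
  have key : (0:ℝ) ≤ |u| * s * (|A| - s * |B|)^2 := by positivity
  have e1 : |u| * s * |A|^2 = |u| * s * A^2 := by rw [hA]
  have e2 : |u| * s * (s^2 * |B|^2) = |u| * s * (s^2 * B^2) := by rw [hB]
  have h2 : 2 * (|u| * (s^2 * (|A| * |B|))) ≤ |u| * s * A^2 + |u| * s * (s^2 * B^2) := by
    nlinarith [key, e1, e2]
  rw [hs2] at h2
  nlinarith [h1, h2, sq_nonneg B]

lemma key_lower (u : ℝ) (n : ℕ) :
    ((n:ℝ) + 1 - |u| * Real.sqrt ((n:ℝ)+1) / 2) * (a u (n+1) + a u n) ≤ S u (n+1) := by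
  have hF : (0:ℝ) < (Nat.factorial (n+1) : ℝ) := by positivity
  rw [← mul_le_mul_iff_of_pos_left hF, CD, mul_left_comm, T_mul_fac]
  set A := H (n+1) u
  set B := H n u
  set s := Real.sqrt ((n:ℝ)+1) with hs
  have hs2 : s ^ 2 = (n:ℝ)+1 := sqrt_sq' n
  have hs0 : (0:ℝ) ≤ s := Real.sqrt_nonneg _
  have hu0 : (0:ℝ) ≤ |u| := abs_nonneg u
  have hA : |A| ^ 2 = A ^ 2 := sq_abs A
  have hB : |B| ^ 2 = B ^ 2 := sq_abs B
  have hAB : u * A * B ≤ |u| * |A| * |B| := by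
    rw [show |u| * |A| * |B| = |u * A * B| by rw [abs_mul, abs_mul]]
    exact le_abs_self _
  have h1 : ((n:ℝ)+1) * (u * A * B) ≤ ((n:ℝ)+1) * (|u| * |A| * |B|) :=
    mul_le_mul_of_nonneg_left hAB (by positivity)
  have key : (0:ℝ) ≤ |u| * s * (|A| - s * |B|)^2 := by positivity
  have e1 : |u| * s * |A|^2 = |u| * s * A^2 := by rw [hA]
  have e2 : |u| * s * (s^2 * |B|^2) = |u| * s * (s^2 * B^2) := by rw [hB]
  have h2 : 2 * (|u| * (s^2 * (|A| * |B|))) ≤ |u| * s * A^2 + |u| * s * (s^2 * B^2) := by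
    nlinarith [key, e1, e2]
  rw [hs2] at h2
  nlinarith [h1, h2, sq_nonneg A]

lemma T_eq (u : ℝ) (n : ℕ) : a u (n+2) + a u (n+1) = S u (n+2) - S u n := by
  rw [S_succ, S_succ]; ring

lemma key_lower' (u : ℝ) (n : ℕ) :
    ((n:ℝ) + 2 - |u| * Real.sqrt ((n:ℝ)+2) / 2) * (S u (n+2) - S u n) ≤ S u (n+2) := by
  have h := key_lower u (n+1)
  rw [T_eq] at h
  push_cast at h
  rw [show ((n:ℝ)+1+1) = (n:ℝ)+2 by ring] at h
  exact h

lemma key_upper' (u : ℝ) (n : ℕ) :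
    S u (n+2) ≤ ((n:ℝ) + 3 + |u| * Real.sqrt ((n:ℝ)+2) / 2) * (S u (n+2) - S u n) := by
  have h := key_upper u (n+1)
  rw [T_eq] at h
  push_cast at h
  rw [show ((n:ℝ)+1+1) = (n:ℝ)+2 by ring, show ((n:ℝ)+1+2) = (n:ℝ)+3 by ring] at h
  exact h

lemma sqrt_gap_lower (n : ℕ) : 1 ≤ (Real.sqrt ((n:ℝ)+3) - Real.sqrt ((n:ℝ)+1)) * Real.sqrt ((n:ℝ)+3) := by
  have e3 : Real.sqrt ((n:ℝ)+3) ^ 2 = (n:ℝ)+3 := Real.sq_sqrt (by positivity)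
  have e1 : Real.sqrt ((n:ℝ)+1) ^ 2 = (n:ℝ)+1 := Real.sq_sqrt (by positivity)
  have h13 : Real.sqrt ((n:ℝ)+1) ≤ Real.sqrt ((n:ℝ)+3) := Real.sqrt_le_sqrt (by linarith)
  nlinarith [Real.sqrt_nonneg ((n:ℝ)+1), Real.sqrt_nonneg ((n:ℝ)+3)]

lemma sqrt_gap_upper (n : ℕ) : (Real.sqrt ((n:ℝ)+3) - Real.sqrt ((n:ℝ)+1)) * Real.sqrt ((n:ℝ)+1) ≤ 1 := by
  have e3 : Real.sqrt ((n:ℝ)+3) ^ 2 = (n:ℝ)+3 := Real.sq_sqrt (by positivity)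
  have e1 : Real.sqrt ((n:ℝ)+1) ^ 2 = (n:ℝ)+1 := Real.sq_sqrt (by positivity)
  have h13 : Real.sqrt ((n:ℝ)+1) ≤ Real.sqrt ((n:ℝ)+3) := Real.sqrt_le_sqrt (by linarith)
  nlinarith [Real.sqrt_nonneg ((n:ℝ)+1), Real.sqrt_nonneg ((n:ℝ)+3)]

lemma one_le_sqrt' (x : ℝ) (hx : 1 ≤ x) : 1 ≤ Real.sqrt x := by
  rw [show (1:ℝ) = Real.sqrt 1 by simp]
  exact Real.sqrt_le_sqrt hx

/-- two-step induction from a base point -/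
lemma two_step {P : ℕ → Prop} {k : ℕ} (h0 : P k) (h1 : P (k+1))
    (step : ∀ n, k ≤ n → P n → P (n+2)) : ∀ n, k ≤ n → P n := by
  have main : ∀ m, P (k + m) ∧ P (k + m + 1) := by
    intro m
    induction m with
    | zero => exact ⟨h0, h1⟩
    | succ m ih =>
      refine ⟨ih.2, ?_⟩
      exact step (k + m) (Nat.le_add_right _ _) ih.1
  intro n hn
  obtain ⟨m, rfl⟩ := Nat.exists_eq_add_of_le hn
  exact (main m).1

/-- pure arithmetic for the upper-bound induction step -/
lemma upper_step_arith (nR s1 s3 A M C Sn Sn2 : ℝ)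
    (h13 : s1 ≤ s3)
    (hgap : 1 ≤ (s3 - s1) * s3)
    (hM2 : 2 ≤ M) (hstep1 : nR + 3 - A * s3 ≤ M) (hAs3 : A ≤ s3)
    (e3 : s3 ^ 2 = nR + 3)
    (hrec : Sn2 * (M - 1) ≤ M * Sn) (hC0 : 0 < C)
    (ih : Sn ≤ C * (s1 - A)) : Sn2 ≤ C * (s3 - A) := by
  have hstep2 : s3 - A ≤ M * (s3 - s1) := by
    have h1 : (nR + 3 - A * s3) * (s3 - s1) ≤ M * (s3 - s1) :=
      mul_le_mul_of_nonneg_right hstep1 (by linarith)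
    have h2 : (s3 - A) * 1 ≤ (s3 - A) * ((s3 - s1) * s3) :=
      mul_le_mul_of_nonneg_left hgap (by linarith)
    nlinarith [h1, h2, e3]
  have final : Sn2 * (M-1) ≤ (C * (s3 - A)) * (M-1) := by
    have hih : M * Sn ≤ M * (C * (s1 - A)) := mul_le_mul_of_nonneg_left ih (by linarith)
    have hkey : M * (C * (s1 - A)) ≤ (C * (s3 - A)) * (M - 1) := by
      have := mul_le_mul_of_nonneg_left hstep2 (le_of_lt hC0)
      nlinarith
    linarith
  exact le_of_mul_le_mul_right final (by linarith : (0:ℝ) < M - 1)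

/-- pure arithmetic for the lower-bound induction step -/
lemma lower_step_arith (nR s1 s3 A' N c Sn Sn2 : ℝ)
    (h13 : s1 ≤ s3) (hs1 : 1 ≤ s1)
    (hgap : (s3 - s1) * s1 ≤ 1)
    (hN1 : 2 ≤ N) (hstep1 : N ≤ nR + 1 + A' * s1)
    (hss : nR + 1 ≤ s1 * s3)
    (hrec : N * Sn ≤ Sn2 * (N - 1)) (hc0 : 0 < c) (hA'0 : 0 ≤ A')
    (ih : c * (s1 + A') ≤ Sn) : c * (s3 + A') ≤ Sn2 := by
  have hstep2 : N * (s3 - s1) ≤ s3 + A' := by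
    -- N (s3 - s1) ≤ N / s1 ≤ s3 + A'  since N ≤ s1 s3 + A' s1
    have hs1pos : (0:ℝ) < s1 := by linarith
    have h1 : N * ((s3 - s1) * s1) ≤ N * 1 := mul_le_mul_of_nonneg_left hgap (by linarith)
    have h2 : N * 1 ≤ (s3 + A') * s1 := by nlinarith [hss, hstep1]
    have h3 : N * ((s3 - s1) * s1) ≤ (s3 + A') * s1 := le_trans h1 h2
    have := le_of_mul_le_mul_right (by nlinarith [h3] : (N * (s3 - s1)) * s1 ≤ (s3 + A') * s1) hs1pos
    linarith
  have final : (c * (s3 + A')) * (N - 1) ≤ Sn2 * (N - 1) := by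
    have hih : N * (c * (s1 + A')) ≤ N * Sn := mul_le_mul_of_nonneg_left ih (by linarith)
    have hkey : (c * (s3 + A')) * (N - 1) ≤ N * (c * (s1 + A')) := by
      have := mul_le_mul_of_nonneg_left hstep2 (le_of_lt hc0)
      nlinarith
    linarith
  exact le_of_mul_le_mul_right final (by linarith : (0:ℝ) < N - 1)

set_option maxHeartbeats 1000000 in
/-- Upper bound: S u n ≤ C √(n+1). -/
lemma S_upper (u : ℝ) : ∃ C > 0, ∀ n, S u n ≤ C * Real.sqrt ((n:ℝ)+1) := by
  obtain ⟨K, hK2, hKu⟩ : ∃ K : ℕ, 2 ≤ K ∧ u^2 + 2 ≤ (K:ℝ) :=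
    ⟨Nat.ceil (u^2) + 2, by omega, by push_cast; linarith [Nat.le_ceil (u^2)]⟩
  have hd0 : (0:ℝ) ≤ |u| / 2 := by positivity
  have hA0 : (0:ℝ) ≤ |u| / 2 + 1 := by positivity
  have hAK : |u| / 2 + 1 < Real.sqrt ((K:ℝ)+1) := by
    have h1 : (|u| / 2 + 1)^2 < (K:ℝ)+1 := by
      have h2 : |u|^2 = u^2 := sq_abs u
      nlinarith [sq_nonneg (3*|u| - 2)]
    nlinarith [Real.sq_sqrt (show (0:ℝ) ≤ (K:ℝ)+1 by positivity),
      Real.sqrt_nonneg ((K:ℝ)+1), h1]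
  obtain ⟨C, hC0, hCeq⟩ : ∃ C : ℝ, 0 < C ∧
      C * (Real.sqrt ((K:ℝ)+1) - (|u| / 2 + 1)) = S u (K+1) := by
    refine ⟨S u (K+1) / (Real.sqrt ((K:ℝ)+1) - (|u| / 2 + 1)),
      div_pos (S_pos u (K+1)) (by linarith), ?_⟩
    exact div_mul_cancel₀ _ (by linarith)
  have base0 : S u K ≤ C * (Real.sqrt ((K:ℝ)+1) - (|u| / 2 + 1)) := by
    rw [hCeq]; exact S_mono u (Nat.le_succ K)
  have base1 : S u (K+1) ≤ C * (Real.sqrt (((K+1:ℕ):ℝ)+1) - (|u| / 2 + 1)) := by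
    rw [show (((K+1:ℕ):ℝ)) = (K:ℝ)+1 by push_cast; ring]
    have h2 : Real.sqrt ((K:ℝ)+1) ≤ Real.sqrt ((K:ℝ)+1+1) := Real.sqrt_le_sqrt (by linarith)
    nlinarith [mul_le_mul_of_nonneg_left (sub_le_sub_right h2 (|u| / 2 + 1)) (le_of_lt hC0)]
  have main : ∀ n, K ≤ n → S u n ≤ C * (Real.sqrt ((n:ℝ)+1) - (|u| / 2 + 1)) := by
    apply two_step (P := fun n => S u n ≤ C * (Real.sqrt ((n:ℝ)+1) - (|u| / 2 + 1))) base0 base1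
    intro n hn ih
    have hKn : (K:ℝ) ≤ (n:ℝ) := by exact_mod_cast hn
    have h12 : Real.sqrt ((n:ℝ)+1) ≤ Real.sqrt ((n:ℝ)+2) := Real.sqrt_le_sqrt (by linarith)
    have h23 : Real.sqrt ((n:ℝ)+2) ≤ Real.sqrt ((n:ℝ)+3) := Real.sqrt_le_sqrt (by linarith)
    have hs31 : 1 ≤ Real.sqrt ((n:ℝ)+3) := one_le_sqrt' _ (by
      have := Nat.cast_nonneg (α:=ℝ) n; linarith)
    have e3 : Real.sqrt ((n:ℝ)+3) ^ 2 = (n:ℝ)+3 := Real.sq_sqrt (by positivity)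
    have e2 : Real.sqrt ((n:ℝ)+2) ^ 2 = (n:ℝ)+2 := Real.sq_sqrt (by positivity)
    have huK : |u| ≤ Real.sqrt ((n:ℝ)+2) := by
      rw [show |u| = Real.sqrt (u^2) from (Real.sqrt_sq_eq_abs u).symm]
      apply Real.sqrt_le_sqrt
      linarith
    have hM2 : 2 ≤ (n:ℝ) + 2 - |u| * Real.sqrt ((n:ℝ)+2) / 2 := by
      have h1 : |u| * Real.sqrt ((n:ℝ)+2) ≤ Real.sqrt ((n:ℝ)+2) * Real.sqrt ((n:ℝ)+2) :=
        mul_le_mul_of_nonneg_right huK (Real.sqrt_nonneg _)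
      have h2K : (2:ℝ) ≤ (K:ℝ) := by exact_mod_cast hK2
      nlinarith [e2]
    have hkl := key_lower' u n
    have hSrec : S u (n+2) * (((n:ℝ) + 2 - |u| * Real.sqrt ((n:ℝ)+2) / 2) - 1)
        ≤ ((n:ℝ) + 2 - |u| * Real.sqrt ((n:ℝ)+2) / 2) * S u n := by nlinarith [hkl]
    have hstep1 : (n:ℝ) + 3 - (|u| / 2 + 1) * Real.sqrt ((n:ℝ)+3)
        ≤ (n:ℝ) + 2 - |u| * Real.sqrt ((n:ℝ)+2) / 2 := by
      have hds : |u| / 2 * Real.sqrt ((n:ℝ)+2) ≤ |u| / 2 * Real.sqrt ((n:ℝ)+3) :=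
        mul_le_mul_of_nonneg_left h23 hd0
      nlinarith [hds, hs31]
    have hAs3 : |u| / 2 + 1 ≤ Real.sqrt ((n:ℝ)+3) := by
      have h5 : Real.sqrt ((K:ℝ)+1) ≤ Real.sqrt ((n:ℝ)+3) :=
        Real.sqrt_le_sqrt (by linarith)
      linarith
    have hgoal := upper_step_arith (n:ℝ) (Real.sqrt ((n:ℝ)+1)) (Real.sqrt ((n:ℝ)+3))
      (|u| / 2 + 1) ((n:ℝ) + 2 - |u| * Real.sqrt ((n:ℝ)+2) / 2) C (S u n) (S u (n+2))
      (le_trans h12 h23) (sqrt_gap_lower n) hM2 hstep1 hAs3 e3 hSrec hC0 ih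
    push_cast
    rw [show ((n:ℝ)+2+1) = (n:ℝ)+3 by ring]
    exact hgoal
  -- globalize
  refine ⟨max C (S u K), lt_max_of_lt_left hC0, fun n => ?_⟩
  rcases le_or_gt K n with h | h
  · have h0 := main n h
    have h1 : C * (Real.sqrt ((n:ℝ)+1) - (|u| / 2 + 1)) ≤ C * Real.sqrt ((n:ℝ)+1) := by
      nlinarith
    have h2 : C * Real.sqrt ((n:ℝ)+1) ≤ max C (S u K) * Real.sqrt ((n:ℝ)+1) :=
      mul_le_mul_of_nonneg_right (le_max_left _ _) (Real.sqrt_nonneg _)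
    linarith
  · have h1 : S u n ≤ S u K := S_mono u (le_of_lt h)
    have h2 : (1:ℝ) ≤ Real.sqrt ((n:ℝ)+1) := one_le_sqrt' _ (by
      have := Nat.cast_nonneg (α:=ℝ) n; linarith)
    have h4 : 0 ≤ S u K := le_of_lt (S_pos u K)
    nlinarith [le_max_right C (S u K), le_max_left C (S u K), hC0]

lemma sqrt4 : Real.sqrt 4 = 2 := by
  rw [show (4:ℝ) = 2^2 by norm_num, Real.sqrt_sq (by norm_num : (0:ℝ) ≤ 2)]

set_option maxHeartbeats 1000000 in
/-- Lower bound: c √(n+1) ≤ S u n. -/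
lemma S_lower (u : ℝ) : ∃ c > 0, ∀ n : ℕ, c * Real.sqrt ((n:ℝ)+1) ≤ S u n := by
  have hc0 : (0:ℝ) < 1 / (|u| + 4) := by positivity
  have hA'0 : (0:ℝ) ≤ |u| + 2 := by positivity
  have main : ∀ n : ℕ, 0 ≤ n → 1 / (|u| + 4) * (Real.sqrt ((n:ℝ)+1) + (|u| + 2)) ≤ S u n := by
    apply two_step (P := fun n : ℕ => 1 / (|u| + 4) * (Real.sqrt ((n:ℝ)+1) + (|u| + 2)) ≤ S u n)
    · -- base 0
      have h1 : Real.sqrt ((0:ℕ):ℝ) = 0 := by norm_num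
      have : Real.sqrt (((0:ℕ):ℝ)+1) = 1 := by norm_num
      rw [this]
      have h2 := one_le_S u 0
      rw [div_mul_eq_mul_div, div_le_iff₀ (by positivity : (0:ℝ) < |u| + 4)]
      nlinarith
    · -- base 1
      have h1 : Real.sqrt (((0+1:ℕ):ℝ)+1) ≤ 2 :=
        le_trans (Real.sqrt_le_sqrt (by norm_num)) (le_of_eq sqrt4)
      have h2 := one_le_S u 1
      have h3 : 1 / (|u| + 4) * (Real.sqrt (((0+1:ℕ):ℝ)+1) + (|u| + 2))
          ≤ 1 / (|u| + 4) * (2 + (|u| + 2)) := by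
        apply mul_le_mul_of_nonneg_left _ (le_of_lt hc0)
        linarith
      have h4 : 1 / (|u| + 4) * (2 + (|u| + 2)) = 1 := by
        rw [div_mul_eq_mul_div, div_eq_one_iff_eq (by positivity)]
        ring
      calc 1 / (|u| + 4) * (Real.sqrt (((0+1:ℕ):ℝ)+1) + (|u| + 2))
          ≤ 1 / (|u| + 4) * (2 + (|u| + 2)) := h3
        _ = 1 := h4
        _ ≤ S u (0+1) := one_le_S u 1
    · -- step
      intro n _ ih
      have hn0 : (0:ℝ) ≤ (n:ℝ) := Nat.cast_nonneg n
      have h12 : Real.sqrt ((n:ℝ)+1) ≤ Real.sqrt ((n:ℝ)+2) := Real.sqrt_le_sqrt (by linarith)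
      have h23 : Real.sqrt ((n:ℝ)+2) ≤ Real.sqrt ((n:ℝ)+3) := Real.sqrt_le_sqrt (by linarith)
      have hs11 : 1 ≤ Real.sqrt ((n:ℝ)+1) := one_le_sqrt' _ (by linarith)
      have hs2nn : 0 ≤ Real.sqrt ((n:ℝ)+2) := Real.sqrt_nonneg _
      -- s2 ≤ 2 s1
      have hs2s1 : Real.sqrt ((n:ℝ)+2) ≤ 2 * Real.sqrt ((n:ℝ)+1) := by
        have h1 : Real.sqrt ((n:ℝ)+2) ≤ Real.sqrt (4*((n:ℝ)+1)) := Real.sqrt_le_sqrt (by linarith)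
        have h2 : Real.sqrt (4*((n:ℝ)+1)) = Real.sqrt 4 * Real.sqrt ((n:ℝ)+1) :=
          Real.sqrt_mul (by norm_num) _
        rw [h2, sqrt4] at h1
        exact h1
      -- N ≥ 2
      have hN1 : (2:ℝ) ≤ (n:ℝ) + 3 + |u| * Real.sqrt ((n:ℝ)+2) / 2 := by
        nlinarith [mul_nonneg (abs_nonneg u) hs2nn, hn0]
      -- hstep1 : N ≤ n+1 + A' s1
      have hstep1 : (n:ℝ) + 3 + |u| * Real.sqrt ((n:ℝ)+2) / 2
          ≤ (n:ℝ) + 1 + (|u| + 2) * Real.sqrt ((n:ℝ)+1) := by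
        have h1 : |u| * Real.sqrt ((n:ℝ)+2) ≤ |u| * (2 * Real.sqrt ((n:ℝ)+1)) :=
          mul_le_mul_of_nonneg_left hs2s1 (abs_nonneg u)
        nlinarith [hs11, abs_nonneg u]
      -- hss : n+1 ≤ s1 s3
      have hss : (n:ℝ) + 1 ≤ Real.sqrt ((n:ℝ)+1) * Real.sqrt ((n:ℝ)+3) := by
        have h1 : Real.sqrt ((n:ℝ)+1) * Real.sqrt ((n:ℝ)+3) = Real.sqrt (((n:ℝ)+1)*((n:ℝ)+3)) :=
          (Real.sqrt_mul (by linarith) _).symm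
        have h2 : Real.sqrt ((((n:ℝ)+1)^2)) ≤ Real.sqrt (((n:ℝ)+1)*((n:ℝ)+3)) :=
          Real.sqrt_le_sqrt (by nlinarith)
        rw [Real.sqrt_sq (by linarith)] at h2
        rw [h1]
        exact h2
      -- hrec
      have hku := key_upper' u n
      have hrec : ((n:ℝ) + 3 + |u| * Real.sqrt ((n:ℝ)+2) / 2) * S u n
          ≤ S u (n+2) * (((n:ℝ) + 3 + |u| * Real.sqrt ((n:ℝ)+2) / 2) - 1) := by
        nlinarith [hku]
      have hgoal := lower_step_arith (n:ℝ) (Real.sqrt ((n:ℝ)+1)) (Real.sqrt ((n:ℝ)+3))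
        (|u| + 2) ((n:ℝ) + 3 + |u| * Real.sqrt ((n:ℝ)+2) / 2) (1 / (|u| + 4))
        (S u n) (S u (n+2))
        (le_trans h12 h23) hs11 (sqrt_gap_upper n) hN1 hstep1 hss hrec hc0 hA'0 ih
      push_cast
      rw [show ((n:ℝ)+2+1) = (n:ℝ)+3 by ring]
      exact hgoal
  refine ⟨1 / (|u| + 4), hc0, fun n => ?_⟩
  have h := main n (Nat.zero_le n)
  nlinarith [Real.sqrt_nonneg ((n:ℝ)+1), hc0]

/-- eventual pointwise bound a_{n+2} ≤ C'/√(n+2) -/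
lemma a_bound (u : ℝ) : ∃ C > 0, ∃ K : ℕ, ∀ n, K ≤ n →
    a u (n+2) ≤ C / Real.sqrt ((n:ℝ)+2) := by
  obtain ⟨C, hC0, hC⟩ := S_upper u
  obtain ⟨K, hKu⟩ : ∃ K : ℕ, u^2 ≤ (K:ℝ) := ⟨Nat.ceil (u^2), Nat.le_ceil _⟩
  refine ⟨4*C, by positivity, K, fun n hn => ?_⟩
  have hKn : (K:ℝ) ≤ (n:ℝ) := by exact_mod_cast hn
  have hn0 : (0:ℝ) ≤ (n:ℝ) := Nat.cast_nonneg n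
  have e2 : Real.sqrt ((n:ℝ)+2) ^ 2 = (n:ℝ)+2 := Real.sq_sqrt (by positivity)
  have hs2pos : 0 < Real.sqrt ((n:ℝ)+2) := Real.sqrt_pos.mpr (by linarith)
  have huK : |u| ≤ Real.sqrt ((n:ℝ)+2) := by
    rw [show |u| = Real.sqrt (u^2) from (Real.sqrt_sq_eq_abs u).symm]
    apply Real.sqrt_le_sqrt; linarith
  have hT0 : 0 ≤ S u (n+2) - S u n := by
    rw [← T_eq]
    have := a_nonneg u (n+2); have := a_nonneg u (n+1); linarith
  have hkl := key_lower' u n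
  have hM : ((n:ℝ)+2)/2 ≤ (n:ℝ) + 2 - |u| * Real.sqrt ((n:ℝ)+2) / 2 := by
    nlinarith [mul_le_mul_of_nonneg_right huK (le_of_lt hs2pos), e2]
  have h1 : ((n:ℝ)+2)/2 * (S u (n+2) - S u n) ≤ S u (n+2) := by
    calc ((n:ℝ)+2)/2 * (S u (n+2) - S u n)
        ≤ ((n:ℝ) + 2 - |u| * Real.sqrt ((n:ℝ)+2) / 2) * (S u (n+2) - S u n) :=
          mul_le_mul_of_nonneg_right hM hT0
      _ ≤ S u (n+2) := hkl
  have hs32 : Real.sqrt ((n:ℝ)+3) ≤ 2 * Real.sqrt ((n:ℝ)+2) := by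
    have ha : Real.sqrt ((n:ℝ)+3) ≤ Real.sqrt (4*((n:ℝ)+2)) := Real.sqrt_le_sqrt (by linarith)
    have hb : Real.sqrt (4*((n:ℝ)+2)) = Real.sqrt 4 * Real.sqrt ((n:ℝ)+2) :=
      Real.sqrt_mul (by norm_num) _
    rw [hb, sqrt4] at ha
    exact ha
  have h2 : S u (n+2) ≤ C * (2 * Real.sqrt ((n:ℝ)+2)) := by
    have hc := hC (n+2)
    rw [show (((n+2:ℕ)):ℝ)+1 = (n:ℝ)+3 by push_cast; ring] at hc
    calc S u (n+2) ≤ C * Real.sqrt ((n:ℝ)+3) := hc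
      _ ≤ C * (2 * Real.sqrt ((n:ℝ)+2)) := mul_le_mul_of_nonneg_left hs32 (le_of_lt hC0)
  -- (n+2) * T ≤ 4 C √(n+2), and a_{n+2} ≤ T
  have h3 : ((n:ℝ)+2) * (S u (n+2) - S u n) ≤ 4*C * Real.sqrt ((n:ℝ)+2) := by linarith
  have h4 : a u (n+2) ≤ S u (n+2) - S u n := by
    rw [← T_eq]
    have := a_nonneg u (n+1); linarith
  have h5 : ((n:ℝ)+2) * a u (n+2) ≤ 4*C * Real.sqrt ((n:ℝ)+2) := by
    have := mul_le_mul_of_nonneg_left h4 (by linarith : (0:ℝ) ≤ (n:ℝ)+2)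
    linarith
  rw [le_div_iff₀ hs2pos]
  have h6 : (a u (n+2) * Real.sqrt ((n:ℝ)+2)) * Real.sqrt ((n:ℝ)+2)
      ≤ (4*C) * Real.sqrt ((n:ℝ)+2) := by nlinarith [h5, e2]
  exact le_of_mul_le_mul_right h6 hs2pos

lemma summable_A (u γ : ℝ) (hγ : 1/2 < γ) :
    Summable (fun q : ℕ => a u (q+1) / ((q:ℝ)+1) ^ γ) := by
  obtain ⟨C, hC0, K, hK⟩ := a_bound u
  rw [← summable_nat_add_iff (K+1)]
  have hsum : Summable (fun q : ℕ => C * ((q:ℝ)+1) ^ (-(1/2+γ))) := by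
    apply Summable.mul_left
    have h1 : Summable (fun n : ℕ => 1 / (n:ℝ) ^ (1/2+γ)) :=
      Real.summable_one_div_nat_rpow.mpr (by linarith)
    have h2 := (summable_nat_add_iff 1).mpr h1
    refine h2.congr fun n => ?_
    push_cast
    rw [Real.rpow_neg (by positivity), one_div]
  apply Summable.of_nonneg_of_le _ _ hsum
  · intro q
    exact div_nonneg (a_nonneg u _) (le_of_lt (Real.rpow_pos_of_pos (by positivity) _))
  · intro q
    have hKq := hK (q+K) (Nat.le_add_left K q)
    have hx : (0:ℝ) < (q:ℝ) + (K:ℝ) + 2 := by positivity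
    have hcast : ((q + (K+1) :ℕ):ℝ) + 1 = (q:ℝ) + (K:ℝ) + 2 := by push_cast; ring
    have hcast2 : ((q + K :ℕ):ℝ) + 2 = (q:ℝ) + (K:ℝ) + 2 := by push_cast; ring
    have ha2 : a u ((q+(K+1))+1) ≤ C / Real.sqrt ((q:ℝ) + (K:ℝ) + 2) := by
      rw [← hcast2]
      exact hKq
    calc a u ((q+(K+1))+1) / (((q + (K+1) :ℕ):ℝ) + 1) ^ γ
        ≤ (C / Real.sqrt ((q:ℝ) + (K:ℝ) + 2)) / (((q + (K+1) :ℕ):ℝ) + 1) ^ γ := by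
          have hp : (0:ℝ) < (((q + (K+1) :ℕ):ℝ) + 1) ^ γ :=
            Real.rpow_pos_of_pos (by positivity) _
          exact (div_le_div_iff_of_pos_right hp).mpr ha2

      _ = C * ((q:ℝ) + (K:ℝ) + 2) ^ (-(1/2+γ)) := by
          rw [hcast, Real.sqrt_eq_rpow, div_div, ← Real.rpow_add hx,
            Real.rpow_neg (le_of_lt hx), div_eq_mul_inv]
      _ ≤ C * ((q:ℝ)+1) ^ (-(1/2+γ)) := by
          apply mul_le_mul_of_nonneg_left _ (le_of_lt hC0)
          apply Real.rpow_le_rpow_of_nonpos (by positivity) (by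
            have : (0:ℝ) ≤ (K:ℝ) := Nat.cast_nonneg K
            linarith) (by linarith)

set_option maxHeartbeats 1000000 in
lemma not_summable_B (u γ : ℝ) (hγ : γ ≤ 1/2)
    (hs : Summable (fun q : ℕ => a u (q+1) / ((q:ℝ)+1) ^ γ)) : False := by
  obtain ⟨c, hc0, hc⟩ := S_lower u
  have hfnn : ∀ q : ℕ, 0 ≤ a u (q+1) / ((q:ℝ)+1) ^ γ := fun q =>
    div_nonneg (a_nonneg u _) (le_of_lt (Real.rpow_pos_of_pos (by positivity) _))
  have h2 : Summable (fun n : ℕ =>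
      a u (2*n+1) / (((2*n:ℕ):ℝ)+1) ^ γ + a u ((2*n+1)+1) / (((2*n+1:ℕ):ℝ)+1) ^ γ) := by
    have ha := hs.comp_injective (fun x y h => by simp only [] at h; omega : Function.Injective (fun n : ℕ => 2*n))
    have hb := hs.comp_injective (fun x y h => by simp only [] at h; omega : Function.Injective (fun n : ℕ => 2*n+1))
    exact ha.add hb
  have key : ∀ n : ℕ, c / (3+|u|) * (1/((n:ℝ)+1)) ≤
      a u (2*n+1) / (((2*n:ℕ):ℝ)+1) ^ γ + a u ((2*n+1)+1) / (((2*n+1:ℕ):ℝ)+1) ^ γ := by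
    intro n
    have hn0 : (0:ℝ) ≤ (n:ℝ) := Nat.cast_nonneg n
    have hs1 : (1:ℝ) ≤ Real.sqrt (2*(n:ℝ)+2) := one_le_sqrt' _ (by linarith)
    have hspos : (0:ℝ) < Real.sqrt (2*(n:ℝ)+2) := by linarith
    have e2 : Real.sqrt (2*(n:ℝ)+2) ^ 2 = 2*(n:ℝ)+2 := Real.sq_sqrt (by linarith)
    -- denominators ≤ √(2n+2)
    have hd1 : (((2*n:ℕ):ℝ)+1) ^ γ ≤ Real.sqrt (2*(n:ℝ)+2) := by
      have hb : (1:ℝ) ≤ ((2*n:ℕ):ℝ)+1 := by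
        have : (0:ℝ) ≤ ((2*n:ℕ):ℝ) := Nat.cast_nonneg _
        linarith
      calc (((2*n:ℕ):ℝ)+1) ^ γ ≤ (((2*n:ℕ):ℝ)+1) ^ (1/2:ℝ) :=
            Real.rpow_le_rpow_of_exponent_le hb hγ
        _ = Real.sqrt (((2*n:ℕ):ℝ)+1) := (Real.sqrt_eq_rpow _).symm
        _ ≤ Real.sqrt (2*(n:ℝ)+2) := Real.sqrt_le_sqrt (by push_cast; linarith)
    have hd2 : (((2*n+1:ℕ):ℝ)+1) ^ γ ≤ Real.sqrt (2*(n:ℝ)+2) := by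
      have hb : (1:ℝ) ≤ ((2*n+1:ℕ):ℝ)+1 := by
        have : (0:ℝ) ≤ ((2*n+1:ℕ):ℝ) := Nat.cast_nonneg _
        linarith
      calc (((2*n+1:ℕ):ℝ)+1) ^ γ ≤ (((2*n+1:ℕ):ℝ)+1) ^ (1/2:ℝ) :=
            Real.rpow_le_rpow_of_exponent_le hb hγ
        _ = Real.sqrt (((2*n+1:ℕ):ℝ)+1) := (Real.sqrt_eq_rpow _).symm
        _ ≤ Real.sqrt (2*(n:ℝ)+2) := Real.sqrt_le_sqrt (by push_cast; linarith)
    have hp1 : (0:ℝ) < (((2*n:ℕ):ℝ)+1) ^ γ := Real.rpow_pos_of_pos (by positivity) _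
    have hp2 : (0:ℝ) < (((2*n+1:ℕ):ℝ)+1) ^ γ := Real.rpow_pos_of_pos (by positivity) _
    have hq1 : a u (2*n+1) / Real.sqrt (2*(n:ℝ)+2) ≤ a u (2*n+1) / (((2*n:ℕ):ℝ)+1) ^ γ :=
      div_le_div_of_nonneg_left (a_nonneg u _) hp1 hd1
    have hq2 : a u ((2*n+1)+1) / Real.sqrt (2*(n:ℝ)+2)
        ≤ a u ((2*n+1)+1) / (((2*n+1:ℕ):ℝ)+1) ^ γ :=
      div_le_div_of_nonneg_left (a_nonneg u _) hp2 hd2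
    -- T lower bound from key_upper' and S_lower
    have hku := key_upper' u (2*n)
    have hcast : ((2*n:ℕ):ℝ) = 2*(n:ℝ) := by push_cast; ring
    rw [hcast] at hku
    have hT0 : 0 ≤ S u (2*n+2) - S u (2*n) := by
      rw [← T_eq]
      have := a_nonneg u (2*n+2); have := a_nonneg u (2*n+1); linarith
    have hSl := hc (2*n+2)
    have hcs : c * Real.sqrt (2*(n:ℝ)+2) ≤ S u (2*n+2) := by
      calc c * Real.sqrt (2*(n:ℝ)+2) ≤ c * Real.sqrt (((2*n+2:ℕ):ℝ)+1) := by
            apply mul_le_mul_of_nonneg_left _ (le_of_lt hc0)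
            apply Real.sqrt_le_sqrt; push_cast; linarith
        _ ≤ S u (2*n+2) := hSl
    -- N ≤ (3+|u|)(n+1)
    have hsle : Real.sqrt (2*(n:ℝ)+2) ≤ 2*(n:ℝ)+2 := by nlinarith [hs1, e2]
    have hN : 2*(n:ℝ) + 3 + |u| * Real.sqrt (2*(n:ℝ)+2) / 2 ≤ (3+|u|) * ((n:ℝ)+1) := by
      have := mul_le_mul_of_nonneg_left hsle (abs_nonneg u)
      nlinarith
    have hNpos : (0:ℝ) < 2*(n:ℝ) + 3 + |u| * Real.sqrt (2*(n:ℝ)+2) / 2 := by positivity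
    -- c √(2n+2) ≤ (3+|u|)(n+1) (S_{2n+2} - S_{2n})
    have hmain : c * Real.sqrt (2*(n:ℝ)+2) ≤ ((3+|u|) * ((n:ℝ)+1)) * (S u (2*n+2) - S u (2*n)) := by
      calc c * Real.sqrt (2*(n:ℝ)+2) ≤ S u (2*n+2) := hcs
        _ ≤ (2*(n:ℝ) + 3 + |u| * Real.sqrt (2*(n:ℝ)+2) / 2) * (S u (2*n+2) - S u (2*n)) := hku
        _ ≤ ((3+|u|) * ((n:ℝ)+1)) * (S u (2*n+2) - S u (2*n)) :=
            mul_le_mul_of_nonneg_right hN hT0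
    -- conclude: c/( (3+|u|)(n+1)) ≤ T / √(2n+2)
    have hgpos : (0:ℝ) < (3+|u|) * ((n:ℝ)+1) := by positivity
    have hdivle : c / ((3+|u|) * ((n:ℝ)+1)) ≤ (S u (2*n+2) - S u (2*n)) / Real.sqrt (2*(n:ℝ)+2) := by
      rw [div_le_div_iff₀ hgpos hspos]
      nlinarith [hmain]
    have hTsum : (S u (2*n+2) - S u (2*n)) / Real.sqrt (2*(n:ℝ)+2)
        = a u (2*n+1) / Real.sqrt (2*(n:ℝ)+2) + a u ((2*n+1)+1) / Real.sqrt (2*(n:ℝ)+2) := by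
      rw [← T_eq]
      ring
    have hfinal : c / ((3+|u|) * ((n:ℝ)+1)) ≤
        a u (2*n+1) / (((2*n:ℕ):ℝ)+1) ^ γ + a u ((2*n+1)+1) / (((2*n+1:ℕ):ℝ)+1) ^ γ := by
      rw [hTsum] at hdivle
      linarith
    calc c / (3+|u|) * (1/((n:ℝ)+1)) = c / ((3+|u|) * ((n:ℝ)+1)) := by
          rw [div_mul_div_comm, mul_one]
      _ ≤ _ := hfinal
  have hsum2 : Summable (fun n : ℕ => c / (3+|u|) * (1/((n:ℝ)+1))) := by
    apply Summable.of_nonneg_of_le _ key h2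
    intro n
    positivity
  have hkpos : (0:ℝ) < c / (3+|u|) := by positivity
  have hsum3 : Summable (fun n : ℕ => 1/((n:ℝ)+1)) := by
    have := hsum2.mul_left (c / (3+|u|))⁻¹
    refine this.congr fun n => ?_
    rw [inv_mul_cancel_left₀ (ne_of_gt hkpos)]
  have hsum4 : Summable (fun n : ℕ => 1/((n:ℝ))) := by
    apply (summable_nat_add_iff 1).mp
    refine hsum3.congr fun n => ?_
    push_cast
    ring
  exact Real.not_summable_one_div_natCast hsum4

end HW

/-- For every real `u`, the series `∑_{q ≥ 1} H_q(u)^2 / (q! q^γ)` converges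
if and only if `γ > 1/2`. -/
theorem hermite_weighted_series_summable_iff (u γ : ℝ) :
    Summable (fun q : ℕ =>
      H (q + 1) u ^ 2 / ((Nat.factorial (q + 1) : ℝ) * ((q : ℝ) + 1) ^ γ))
      ↔ γ > 1 / 2 := by
  have hfeq : ∀ q : ℕ, H (q + 1) u ^ 2 / ((Nat.factorial (q + 1) : ℝ) * ((q : ℝ) + 1) ^ γ)
      = HW.a u (q+1) / ((q:ℝ)+1) ^ γ := fun q => by rw [HW.a, div_div]
  constructor
  · intro hs
    by_contra h
    push_neg at h
    exact HW.not_summable_B u γ (by linarith) (hs.congr hfeq)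
  · intro hγ
    exact (HW.summable_A u γ hγ).congr fun q => (hfeq q).symm
end

section
/- Let κ: [-1,1] → ℝ be continuous with κ(1) = 1, |κ(u)| < 1 for u ≠ 1, and 1 - κ(cos θ) ≥ C_1 |θ|^α for |θ| ≤ ε (positive constants C_1, α, ε). Then there exists c > 0 such that ∫_{S^d × S^d} |κ(⟨x,y⟩)|^N dμ(x) dμ(y) ≤ c · N^{-d/α} for all positive integers N, where μ is the volume measure on the d-sphere S^d. -/
open MeasureTheory Metric Set Filter
open scoped Pointwise ENNReal Topology

lemma cap_bound (d : ℕ) (hd : 0 < d) :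
    ∃ C : ℝ, 0 < C ∧ ∀ (x : Metric.sphere (0 : EuclideanSpace ℝ (Fin (d+1))) 1) (r : ℝ), 0 < r →
      (volume : Measure (EuclideanSpace ℝ (Fin (d+1)))).toSphere
        {y : Metric.sphere (0 : EuclideanSpace ℝ (Fin (d+1))) 1 |
          ‖(y : EuclideanSpace ℝ (Fin (d+1))) - (x : EuclideanSpace ℝ (Fin (d+1)))‖ ≤ r}
        ≤ ENNReal.ofReal (C * r ^ d) := by
  set E := EuclideanSpace ℝ (Fin (d+1)) with hE
  have hfr : Module.finrank ℝ E = d + 1 := finrank_euclideanSpace_fin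
  set B := (volume : Measure E) (Metric.closedBall 0 1) with hB
  have hBfin : B ≠ ⊤ := measure_closedBall_lt_top.ne
  set Br := B.toReal with hBrdef
  have hBr : 0 ≤ Br := ENNReal.toReal_nonneg
  have hBle : B ≤ ENNReal.ofReal Br := (ENNReal.ofReal_toReal hBfin).symm.le
  refine ⟨(d+1) * 3 * 2^(d+1) * Br + (d+1) * Br + 1, by positivity, fun x r hr => ?_⟩
  set C : ℝ := (d+1) * 3 * 2^(d+1) * Br + (d+1) * Br + 1 with hCdef
  have hC1 : ((d:ℝ)+1) * Br ≤ C := by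
    have h2 : (0:ℝ) ≤ (d+1) * 3 * 2^(d+1) * Br := by positivity
    simp only [hCdef]; nlinarith
  set s : Set (Metric.sphere (0 : E) 1) :=
    {y : Metric.sphere (0 : E) 1 | ‖(y : E) - (x : E)‖ ≤ r} with hs
  have hs_meas : MeasurableSet s := by
    have : IsClosed s :=
      isClosed_le (Continuous.norm (continuous_subtype_val.sub continuous_const))
        continuous_const
    exact this.measurableSet
  rcases le_or_gt r 1 with hr1 | hr1
  · -- main case : r ≤ 1
    rw [Measure.toSphere_apply' _ hs_meas]
    set K := Nat.ceil (1/r) with hK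
    have hcover : Set.Ioo (0:ℝ) 1 • (Subtype.val '' s) ⊆
        ⋃ j ∈ Finset.range (K+1), Metric.closedBall (((j:ℝ) * r) • (x:E)) (2*r) := by
      rintro z hz
      rcases Set.mem_smul.1 hz with ⟨t, ht, v, hv, rfl⟩
      rcases hv with ⟨y, hy, rfl⟩
      have ht0 : (0:ℝ) < t := ht.1
      have ht1 : t < 1 := ht.2
      set j := Nat.floor (t/r) with hj
      have hjK : j ∈ Finset.range (K+1) := by
        refine Finset.mem_range.2 (Nat.lt_succ_of_le ?_)
        calc j ≤ ⌈t/r⌉₊ := Nat.floor_le_ceil _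
          _ ≤ K := Nat.ceil_le_ceil (by gcongr)
      refine Set.mem_biUnion hjK ?_
      have hxnorm : ‖(x:E)‖ = 1 := by
        simpa using mem_sphere_zero_iff_norm.1 x.2
      have hynorm : ‖(y:E)‖ = 1 := by
        simpa using mem_sphere_zero_iff_norm.1 y.2
      have hjr_le : (j:ℝ) * r ≤ t := by
        have := Nat.floor_le (le_of_lt (div_pos ht0 hr))
        calc (j:ℝ) * r ≤ (t/r) * r := by
              apply mul_le_mul_of_nonneg_right this hr.le
          _ = t := by field_simp
      have ht_lt : t - (j:ℝ)*r ≤ r := by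
        have h2 : t/r < (j:ℝ) + 1 := Nat.lt_floor_add_one _
        have : t < ((j:ℝ)+1) * r := by
          calc t = (t/r)*r := by field_simp
            _ < ((j:ℝ)+1)*r := by apply mul_lt_mul_of_pos_right h2 hr
        nlinarith
      have hdist : ‖t • (y:E) - ((j:ℝ) * r) • (x:E)‖ ≤ 2*r := by
        have h1 : t • (y:E) - ((j:ℝ)*r) • (x:E)
            = t • ((y:E) - (x:E)) + (t - (j:ℝ)*r) • (x:E) := by
          rw [smul_sub, sub_smul]; abel
        rw [h1]
        calc ‖t • ((y:E) - (x:E)) + (t - (j:ℝ)*r) • (x:E)‖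
            ≤ ‖t • ((y:E) - (x:E))‖ + ‖(t - (j:ℝ)*r) • (x:E)‖ := norm_add_le _ _
          _ = |t| * ‖(y:E) - (x:E)‖ + |t - (j:ℝ)*r| * ‖(x:E)‖ := by
              rw [norm_smul, norm_smul, Real.norm_eq_abs, Real.norm_eq_abs]
          _ ≤ 1 * r + r * 1 := by
              apply add_le_add
              · apply mul_le_mul (by rw [abs_of_pos ht0]; exact ht1.le) hy (norm_nonneg _)
                  zero_le_one
              · rw [hxnorm]
                apply mul_le_mul_of_nonneg_right _ zero_le_one
                rw [abs_le]; constructor <;> nlinarith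
          _ = 2*r := by ring
      exact Metric.mem_closedBall.2 ((dist_eq_norm _ _).trans_le hdist)
    have hmeas : (volume : Measure E) (Set.Ioo (0:ℝ) 1 • (Subtype.val '' s))
        ≤ (K+1 : ℕ) * (ENNReal.ofReal ((2*r)^(d+1)) * B) := by
      calc (volume : Measure E) (Set.Ioo (0:ℝ) 1 • (Subtype.val '' s))
          ≤ (volume : Measure E) (⋃ j ∈ Finset.range (K+1),
              Metric.closedBall (((j:ℝ) * r) • (x:E)) (2*r)) := measure_mono hcover
        _ ≤ ∑ j ∈ Finset.range (K+1),
              (volume : Measure E) (Metric.closedBall (((j:ℝ) * r) • (x:E)) (2*r)) :=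
            measure_biUnion_finset_le _ _
        _ = ∑ _j ∈ Finset.range (K+1), (ENNReal.ofReal ((2*r)^(d+1)) * B) := by
            refine Finset.sum_congr rfl fun j _ => ?_
            rw [Measure.addHaar_closedBall' _ _ (by positivity)]
            rw [hfr]
        _ = (K+1 : ℕ) * (ENNReal.ofReal ((2*r)^(d+1)) * B) := by
            rw [Finset.sum_const, Finset.card_range, nsmul_eq_mul]
    calc (Module.finrank ℝ E : ℝ≥0∞) * (volume : Measure E) (Set.Ioo (0:ℝ) 1 • (Subtype.val '' s))
        ≤ (d+1 : ℕ) * ((K+1 : ℕ) * (ENNReal.ofReal ((2*r)^(d+1)) * ENNReal.ofReal Br)) := by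
          rw [hfr]
          exact mul_le_mul_right (hmeas.trans (by
            exact mul_le_mul_right (mul_le_mul_right hBle _) _)) _
      _ = ENNReal.ofReal (((d:ℝ)+1) * (((K:ℝ)+1) * ((2*r)^(d+1) * Br))) := by
          rw [← ENNReal.ofReal_natCast (d+1), ← ENNReal.ofReal_natCast (K+1),
            ← ENNReal.ofReal_mul (by positivity), ← ENNReal.ofReal_mul (by positivity),
            ← ENNReal.ofReal_mul (by positivity)]
          congr 1
          push_cast
          ring
      _ ≤ ENNReal.ofReal (C * r ^ d) := by
          apply ENNReal.ofReal_le_ofReal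
          have hKle : (K:ℝ) + 1 ≤ 3 / r := by
            have h1 : (K:ℝ) < 1/r + 1 := Nat.ceil_lt_add_one (by positivity)
            have h2 : (1:ℝ)/r ≥ 1 := by
              rw [ge_iff_le, le_div_iff₀ hr]; linarith
            have h3 : (1:ℝ)/r + 2 ≤ 3/r := by
              rw [div_add' _ _ _ hr.ne', div_le_div_iff₀ hr hr]
              nlinarith
            linarith
          have key : ((d:ℝ)+1) * (((K:ℝ)+1) * ((2*r)^(d+1) * Br))
              ≤ ((d:ℝ)+1) * 3 * 2^(d+1) * Br * r ^ d := by
            have h2r : (2*r)^(d+1) = 2^(d+1) * r^(d+1) := by rw [mul_pow]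
            have hrd : r^(d+1) = r^d * r := by ring
            calc ((d:ℝ)+1) * (((K:ℝ)+1) * ((2*r)^(d+1) * Br))
                ≤ ((d:ℝ)+1) * ((3/r) * ((2*r)^(d+1) * Br)) := by
                  apply mul_le_mul_of_nonneg_left _ (by positivity)
                  apply mul_le_mul_of_nonneg_right hKle (by positivity)
              _ = ((d:ℝ)+1) * 3 * 2^(d+1) * Br * r ^ d := by
                  rw [h2r, hrd]; field_simp
          calc ((d:ℝ)+1) * (((K:ℝ)+1) * ((2*r)^(d+1) * Br)) ≤ ((d:ℝ)+1) * 3 * 2^(d+1) * Br * r^d := key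
            _ ≤ C * r ^ d := by
                apply mul_le_mul_of_nonneg_right _ (by positivity)
                simp only [hCdef]; push_cast; nlinarith [mul_nonneg (by positivity : (0:ℝ) ≤ (d:ℝ)+1) hBr]
  · -- easy case : 1 < r
    have huniv : (volume : Measure E).toSphere Set.univ
        = (Module.finrank ℝ E : ℝ≥0∞) * (volume : Measure E) (Metric.ball 0 1) :=
      Measure.toSphere_apply_univ _
    calc (volume : Measure E).toSphere s ≤ (volume : Measure E).toSphere Set.univ :=
          measure_mono (Set.subset_univ _)
      _ ≤ (d+1 : ℕ) * ENNReal.ofReal Br := by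
          rw [huniv, hfr]
          apply mul_le_mul_right
          exact (measure_mono Metric.ball_subset_closedBall).trans hBle
      _ = ENNReal.ofReal (((d:ℝ)+1) * Br) := by
          rw [← ENNReal.ofReal_natCast (d+1), ← ENNReal.ofReal_mul (by positivity)]
          congr 1
          push_cast
          ring
      _ ≤ ENNReal.ofReal (C * r ^ d) := by
          apply ENNReal.ofReal_le_ofReal
          have hrd : (1:ℝ) ≤ r ^ d := one_le_pow₀ hr1.le
          calc ((d:ℝ)+1) * Br ≤ C := hC1
            _ = C * 1 := by ring
            _ ≤ C * r ^ d := by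
                apply mul_le_mul_of_nonneg_left hrd (by positivity)


lemma dyadic_exists {x : ℝ} (hx : 1 ≤ x) : ∃ k : ℕ, (2:ℝ)^k ≤ x ∧ x < 2^(k+1) := by
  have hex : ∃ n : ℕ, x < 2^n := pow_unbounded_of_one_lt x one_lt_two
  classical
  have hn1 : x < 2^(Nat.find hex) := Nat.find_spec hex
  have hn0 : Nat.find hex ≠ 0 := by
    intro h
    rw [h] at hn1; simp at hn1; linarith
  obtain ⟨k, hk⟩ := Nat.exists_eq_succ_of_ne_zero hn0
  refine ⟨k, ?_, by rw [← Nat.succ_eq_add_one, ← hk]; exact hn1⟩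
  by_contra hcon
  push_neg at hcon
  exact Nat.find_min hex (by rw [hk]; exact Nat.lt_succ_self k) hcon

lemma decay_bound (d : ℕ) (C₁ α : ℝ) (hC₁ : 0 < C₁) (hα : 0 < α) :
    ∃ M : ℝ, 0 < M ∧ ∀ k : ℕ,
      (2:ℝ)^(k*(d+1)) * Real.exp (-(C₁ * ((2:ℝ)^k)^α)) ≤ M := by
  set m := Nat.ceil (((d:ℝ)+1)/α) with hm
  set u : ℕ → ℝ := fun k => ((2:ℝ)^k)^α with hu
  have hu1 : ∀ k, 1 ≤ u k := fun k =>
    Real.one_le_rpow (one_le_pow₀ one_le_two) hα.le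
  have hu_top : Tendsto u atTop atTop := by
    have : u = fun k : ℕ => ((2:ℝ)^α)^k := by
      funext k
      show ((2:ℝ)^k)^α = ((2:ℝ)^α)^k
      rw [ ← Real.rpow_natCast 2 k, ← Real.rpow_mul (by norm_num),
        ← Real.rpow_natCast (2 ^ α) k, ← Real.rpow_mul (by norm_num)]
      ring_nf
    rw [this]
    exact tendsto_pow_atTop_atTop_of_one_lt
      (Real.one_lt_rpow_iff_of_pos (by norm_num) |>.2 (by norm_num [hα]))
  have hfun : Tendsto (fun x : ℝ => x^m * Real.exp (-(C₁ * x))) atTop (𝓝 0) := by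
    have h1 : Tendsto (fun x : ℝ => C₁ * x) atTop atTop :=
      Tendsto.const_mul_atTop hC₁ tendsto_id
    have h2 : Tendsto (fun y : ℝ => C₁⁻¹^m * (y^m * Real.exp (-y))) atTop (𝓝 0) := by
      simpa using (Real.tendsto_pow_mul_exp_neg_atTop_nhds_zero m).const_mul (C₁⁻¹^m)
    have h3 := h2.comp h1
    convert h3 using 2 with x
    simp only [Function.comp]
    field_simp
    ring_nf
    simp [hC₁.ne']
  have hv : Tendsto (fun k => (u k)^m * Real.exp (-(C₁ * u k))) atTop (𝓝 0) :=
    hfun.comp hu_top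
  obtain ⟨M₀, hM₀⟩ := hv.bddAbove_range
  refine ⟨max M₀ 1, lt_max_of_lt_right one_pos, fun k => ?_⟩
  have key : (2:ℝ)^(k*(d+1)) ≤ (u k)^m := by
    have h2k : (0:ℝ) < 2^k := by positivity
    calc (2:ℝ)^(k*(d+1)) = ((2:ℝ)^k)^(d+1) := by rw [pow_mul]
      _ = ((2:ℝ)^k)^(((d:ℝ)+1)) := by
          rw [← Real.rpow_natCast ((2:ℝ)^k) (d+1)]; norm_num
      _ = (u k)^(((d:ℝ)+1)/α) := by
          rw [hu, ← Real.rpow_mul h2k.le]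
          congr 1
          field_simp
      _ ≤ (u k)^((m:ℝ)) := Real.rpow_le_rpow_of_exponent_le (hu1 k) (Nat.le_ceil _)
      _ = (u k)^m := Real.rpow_natCast _ _
  calc (2:ℝ)^(k*(d+1)) * Real.exp (-(C₁ * ((2:ℝ)^k)^α))
      ≤ (u k)^m * Real.exp (-(C₁ * u k)) := by
        apply mul_le_mul_of_nonneg_right key (Real.exp_nonneg _)
    _ ≤ M₀ := hM₀ (Set.mem_range_self k)
    _ ≤ max M₀ 1 := le_max_left _ _

lemma geom_tail {q : ℝ} (hq0 : 0 ≤ q) (hq1 : q < 1) (s : ℝ) :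
    ∃ D : ℝ, 0 < D ∧ ∀ N : ℕ, 1 ≤ N → q^N ≤ D * (N:ℝ)^(-s) := by
  set m := Nat.ceil s with hm
  have hw : Tendsto (fun N : ℕ => (N:ℝ)^m * q^N) atTop (𝓝 0) :=
    tendsto_pow_const_mul_const_pow_of_lt_one m hq0 hq1
  obtain ⟨D₀, hD₀⟩ := hw.bddAbove_range
  refine ⟨max D₀ 1, lt_max_of_lt_right one_pos, fun N hN => ?_⟩
  have hN0 : (0:ℝ) < N := by exact_mod_cast hN
  have hN1 : (1:ℝ) ≤ N := by exact_mod_cast hN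
  have h1 : q^N ≤ max D₀ 1 * ((N:ℝ)^m)⁻¹ := by
    rw [← div_eq_mul_inv, le_div_iff₀ (by positivity)]
    calc q^N * (N:ℝ)^m = (N:ℝ)^m * q^N := by ring
      _ ≤ D₀ := hD₀ (Set.mem_range_self N)
      _ ≤ max D₀ 1 := le_max_left _ _
  refine h1.trans ?_
  apply mul_le_mul_of_nonneg_left _ (le_max_of_le_right zero_le_one)
  rw [← Real.rpow_natCast (N:ℝ) m, ← Real.rpow_neg hN0.le]
  exact Real.rpow_le_rpow_of_exponent_le hN1 (by simpa using Nat.le_ceil s)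


set_option maxHeartbeats 1000000 in
/-- Upper bound on the moments of an isotropic covariance function on the `d`-sphere,
with respect to the (surface) volume measure on `S^d ⊂ ℝ^{d+1}`. -/
theorem sphere_covariance_moment_upper_bound
    {d : ℕ} (hd : 0 < d) (κ : ℝ → ℝ)
    (hcont : ContinuousOn κ (Set.Icc (-1 : ℝ) 1)) (h1 : κ 1 = 1)
    (hlt : ∀ t ∈ Set.Icc (-1 : ℝ) 1, t ≠ 1 → |κ t| < 1)
    (C₁ α ε : ℝ) (hC₁ : 0 < C₁) (hα : 0 < α) (hε : 0 < ε)
    (hlow : ∀ θ : ℝ, |θ| ≤ ε → C₁ * |θ| ^ α ≤ 1 - κ (Real.cos θ)) :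
    ∃ c : ℝ, 0 < c ∧ ∀ N : ℕ, 1 ≤ N →
      ∫⁻ p : (Metric.sphere (0 : EuclideanSpace ℝ (Fin (d + 1))) 1) ×
              (Metric.sphere (0 : EuclideanSpace ℝ (Fin (d + 1))) 1),
          ENNReal.ofReal
            (|κ (inner ℝ (p.1 : EuclideanSpace ℝ (Fin (d + 1)))
                (p.2 : EuclideanSpace ℝ (Fin (d + 1))))| ^ N)
        ∂((volume : Measure (EuclideanSpace ℝ (Fin (d + 1)))).toSphere.prod
            (volume : Measure (EuclideanSpace ℝ (Fin (d + 1)))).toSphere)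
      ≤ ENNReal.ofReal (c * (N : ℝ) ^ (-(d : ℝ) / α)) := by
  classical
  obtain ⟨Ccap, hCcap, hcap⟩ := cap_bound d hd
  set E := EuclideanSpace ℝ (Fin (d+1)) with hE
  set μs := (volume : Measure E).toSphere with hμs
  set m := μs.prod μs with hm
  -- |κ| ≤ 1 on [-1,1]
  have hκabs : ∀ t ∈ Set.Icc (-1:ℝ) 1, |κ t| ≤ 1 := by
    intro t ht
    by_cases h : t = 1
    · rw [h, h1]; simp
    · exact (hlt t ht h).le
  -- δ : κ > 1/2 near 1
  have hcw : ContinuousWithinAt κ (Set.Icc (-1:ℝ) 1) 1 :=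
    hcont 1 (by constructor <;> norm_num)
  have hmem : κ ⁻¹' Set.Ioi (1/2 : ℝ) ∈ nhdsWithin 1 (Set.Icc (-1:ℝ) 1) :=
    hcw (Ioi_mem_nhds (by rw [h1]; norm_num))
  rw [Metric.mem_nhdsWithin_iff] at hmem
  obtain ⟨δ, hδ, hball⟩ := hmem
  set ε' := min ε (min 1 (Real.sqrt δ)) with hε'def
  have hε'pos : 0 < ε' := lt_min hε (lt_min one_pos (Real.sqrt_pos.2 hδ))
  have hε'le1 : ε' ≤ 1 := (min_le_right _ _).trans (min_le_left _ _)
  have hε'leε : ε' ≤ ε := min_le_left _ _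
  have hε'lesqrt : ε' ≤ Real.sqrt δ := (min_le_right _ _).trans (min_le_right _ _)
  have hε'sq : ε'^2 ≤ δ := by
    have := Real.sq_sqrt hδ.le
    nlinarith [Real.sqrt_nonneg δ]
  have hκpos : ∀ θ : ℝ, 0 ≤ θ → θ ≤ ε' → 1/2 < κ (Real.cos θ) := by
    intro θ h0 hle
    apply hball
    refine ⟨?_, Real.neg_one_le_cos θ, Real.cos_le_one θ⟩
    rw [Metric.mem_ball, Real.dist_eq, abs_of_nonpos (by linarith [Real.cos_le_one θ])]
    have h2 := Real.one_sub_sq_div_two_le_cos (x := θ)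
    have h3 : θ^2 ≤ ε'^2 := by nlinarith
    linarith
  -- q : max of |κ| away from 1
  have hcosε'lt1 : Real.cos ε' < 1 := by
    have h3 : ε' < 3 := by linarith
    have := Real.strictAntiOn_cos (Set.mem_Icc.2 ⟨le_refl 0, Real.pi_pos.le⟩)
      (Set.mem_Icc.2 ⟨hε'pos.le, by linarith [Real.pi_gt_three]⟩) hε'pos
    simpa using this
  have hsub : Set.Icc (-1:ℝ) (Real.cos ε') ⊆ Set.Icc (-1:ℝ) 1 :=
    Set.Icc_subset_Icc le_rfl (Real.cos_le_one _)
  have hne : (Set.Icc (-1:ℝ) (Real.cos ε')).Nonempty :=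
    ⟨-1, Set.mem_Icc.2 ⟨le_refl _, Real.neg_one_le_cos _⟩⟩
  obtain ⟨t₀, ht₀mem, ht₀max⟩ := isCompact_Icc.exists_isMaxOn hne
    ((hcont.mono hsub).abs)
  set q := |κ t₀| with hq
  have hq0 : (0:ℝ) ≤ q := abs_nonneg _
  have hq1 : q < 1 :=
    hlt t₀ (hsub ht₀mem) (ne_of_lt (lt_of_le_of_lt (Set.mem_Icc.1 ht₀mem).2 hcosε'lt1))
  obtain ⟨D, hD, hgeom⟩ := geom_tail hq0 hq1 ((d:ℝ)/α)
  obtain ⟨M, hM, hdecay⟩ := decay_bound d C₁ α hC₁ hα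
  set Mu := (μs Set.univ).toReal with hMudef
  have hMu0 : (0:ℝ) ≤ Mu := ENNReal.toReal_nonneg
  have hMule : μs Set.univ ≤ ENNReal.ofReal Mu :=
    (ENNReal.ofReal_toReal (measure_ne_top _ _)).symm.le
  refine ⟨Mu*Ccap + Mu*Ccap*2^(d+1)*M + Mu^2*D + 1, by positivity, fun N hN => ?_⟩
  have hN0 : (0:ℝ) < N := by exact_mod_cast hN
  set θN : ℝ := (N:ℝ) ^ (-(1:ℝ)/α) with hθNdef
  have hθN0 : 0 < θN := Real.rpow_pos_of_pos hN0 _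
  have hNθ : (N:ℝ) * θN ^ α = 1 := by
    rw [hθNdef, ← Real.rpow_mul hN0.le]
    have h2 : (-(1:ℝ)/α) * α = -1 := by field_simp
    rw [h2, Real.rpow_neg_one]
    field_simp
  have hθNd : θN ^ d = (N:ℝ) ^ (-(d:ℝ)/α) := by
    rw [hθNdef, ← Real.rpow_natCast ((N:ℝ)^(-(1:ℝ)/α)) d, ← Real.rpow_mul hN0.le]
    congr 1
    ring
  have hX0 : (0:ℝ) ≤ (N:ℝ)^(-(d:ℝ)/α) := Real.rpow_nonneg hN0.le _
  -- inner product and angle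
  set f : Metric.sphere (0:E) 1 × Metric.sphere (0:E) 1 → ℝ :=
    fun p => inner ℝ (p.1 : E) (p.2 : E) with hf
  set g : Metric.sphere (0:E) 1 × Metric.sphere (0:E) 1 → ℝ :=
    fun p => Real.arccos (f p) with hg
  have hfcont : Continuous f :=
    (continuous_subtype_val.comp continuous_fst).inner
      (continuous_subtype_val.comp continuous_snd)
  have hgcont : Continuous g := Real.continuous_arccos.comp hfcont
  have hf_mem : ∀ p, f p ∈ Set.Icc (-1:ℝ) 1 := by
    intro p
    have h := abs_real_inner_le_norm (p.1:E) (p.2:E)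
    have h1' : ‖(p.1:E)‖ = 1 := by
      simpa using mem_sphere_zero_iff_norm.1 p.1.2
    have h2' : ‖(p.2:E)‖ = 1 := by
      simpa using mem_sphere_zero_iff_norm.1 p.2.2
    rw [h1', h2', mul_one] at h
    exact Set.mem_Icc.2 (abs_le.1 h)
  have hc : ∀ p, Real.cos (g p) = f p := fun p =>
    Real.cos_arccos (hf_mem p).1 (hf_mem p).2
  have hg0 : ∀ p, 0 ≤ g p := fun p => Real.arccos_nonneg _
  have hgπ : ∀ p, g p ≤ Real.pi := fun p => Real.arccos_le_pi _
  -- section estimate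
  have hsec : ∀ (A : Set (Metric.sphere (0:E) 1 × Metric.sphere (0:E) 1)) (r : ℝ), 0 < r →
      (∀ p ∈ A, g p ≤ r) → m A ≤ ENNReal.ofReal Mu * ENNReal.ofReal (Ccap * r ^ d) := by
    intro A r hr hA
    set T := {p : Metric.sphere (0:E) 1 × Metric.sphere (0:E) 1 |
      ‖(p.2:E) - (p.1:E)‖ ≤ r} with hT
    have hAT : A ⊆ T := by
      intro p hp
      have hθr := hA p hp
      have hnorm : ‖(p.2:E) - (p.1:E)‖^2 = 2 - 2 * f p := by
        rw [norm_sub_sq_real]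
        have h1' : ‖(p.1:E)‖ = 1 := by
          simpa using mem_sphere_zero_iff_norm.1 p.1.2
        have h2' : ‖(p.2:E)‖ = 1 := by
          simpa using mem_sphere_zero_iff_norm.1 p.2.2
        rw [h1', h2', real_inner_comm]
        ring_nf; rfl
      have hcosb := Real.one_sub_sq_div_two_le_cos (x := g p)
      rw [hc p] at hcosb
      have hsq : ‖(p.2:E) - (p.1:E)‖^2 ≤ r^2 := by nlinarith [hg0 p]
      show ‖(p.2:E) - (p.1:E)‖ ≤ r
      nlinarith [norm_nonneg ((p.2:E) - (p.1:E))]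
    have hT_meas : MeasurableSet T :=
      (isClosed_le (Continuous.norm ((continuous_subtype_val.comp continuous_snd).sub
        (continuous_subtype_val.comp continuous_fst))) continuous_const).measurableSet
    calc m A ≤ m T := measure_mono hAT
      _ = ∫⁻ x, μs (Prod.mk x ⁻¹' T) ∂μs := Measure.prod_apply hT_meas
      _ ≤ ∫⁻ _x, ENNReal.ofReal (Ccap * r ^ d) ∂μs := by
          apply lintegral_mono
          intro x
          exact hcap x r hr
      _ = ENNReal.ofReal (Ccap * r ^ d) * μs Set.univ := lintegral_const _
      _ ≤ ENNReal.ofReal Mu * ENNReal.ofReal (Ccap * r ^ d) := by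
          rw [mul_comm]
          exact mul_le_mul_left hMule _
  -- the three regions
  set near := {p : Metric.sphere (0:E) 1 × Metric.sphere (0:E) 1 | g p ≤ θN} with hnear
  set shell : ℕ → Set (Metric.sphere (0:E) 1 × Metric.sphere (0:E) 1) :=
    fun k => {p | (2:ℝ)^k * θN ≤ g p ∧ g p ≤ 2^(k+1) * θN ∧ g p ≤ ε'} with hshell
  set far := {p : Metric.sphere (0:E) 1 × Metric.sphere (0:E) 1 | ε' ≤ g p} with hfar
  have hnear_meas : MeasurableSet near :=
    (isClosed_le hgcont continuous_const).measurableSet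
  have hshell_meas : ∀ k, MeasurableSet (shell k) := by
    intro k
    exact ((isClosed_le continuous_const hgcont).inter
      ((isClosed_le hgcont continuous_const).inter
        (isClosed_le hgcont continuous_const))).measurableSet
  have hfar_meas : MeasurableSet far :=
    (isClosed_le continuous_const hgcont).measurableSet
  -- pointwise bound
  have hpt : ∀ p, ENNReal.ofReal (|κ (f p)| ^ N)
      ≤ Set.indicator near (fun _ => (1:ℝ≥0∞)) p
        + (∑' k : ℕ, Set.indicator (shell k)
            (fun _ => ENNReal.ofReal (Real.exp (-(C₁ * ((2:ℝ)^k)^α)))) p)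
        + Set.indicator far (fun _ => ENNReal.ofReal (q^N)) p := by
    intro p
    by_cases hnear' : g p ≤ θN
    · have hb : ENNReal.ofReal (|κ (f p)| ^ N) ≤ Set.indicator near (fun _ => (1:ℝ≥0∞)) p := by
        rw [Set.indicator_of_mem (show p ∈ near from hnear')]
        exact ENNReal.ofReal_le_one.2 (pow_le_one₀ (abs_nonneg _) (hκabs _ (hf_mem p)))
      exact hb.trans ((self_le_add_right _ _).trans (self_le_add_right _ _))
    push_neg at hnear'
    by_cases hmid : g p ≤ ε'
    · -- middle region
      obtain ⟨k, hk1, hk2⟩ := dyadic_exists (x := g p / θN)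
        ((one_le_div hθN0).2 hnear'.le)
      have hk1' : (2:ℝ)^k * θN ≤ g p := (le_div_iff₀ hθN0).1 hk1
      have hk2' : g p ≤ 2^(k+1) * θN := by
        rw [← div_le_iff₀ hθN0]
        exact hk2.le
      have hmemsh : p ∈ shell k := ⟨hk1', hk2', hmid⟩
      have hκp : 1/2 < κ (f p) := by
        have := hκpos (g p) (hg0 p) hmid
        rwa [hc p] at this
      have hκle : κ (f p) ≤ 1 - C₁ * (g p)^α := by
        have := hlow (g p) (by rw [abs_of_nonneg (hg0 p)]; exact hmid.trans hε'leε)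
        rw [abs_of_nonneg (hg0 p), hc p] at this
        linarith
      have hbound : |κ (f p)| ^ N ≤ Real.exp (-(C₁ * ((2:ℝ)^k)^α)) := by
        have habs : |κ (f p)| = κ (f p) := abs_of_pos (by linarith)
        have hnn : (0:ℝ) ≤ κ (f p) := by linarith
        have h1b : (0:ℝ) ≤ 1 - C₁ * (g p)^α := by linarith
        have hexp : 1 - C₁ * (g p)^α ≤ Real.exp (-(C₁ * (g p)^α)) := by
          have := Real.add_one_le_exp (-(C₁ * (g p)^α))
          linarith
        have hrpow : (2:ℝ)^k * θN ≤ g p → ((2:ℝ)^k)^α * θN^α ≤ (g p)^α := by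
          intro h
          rw [← Real.mul_rpow (by positivity) hθN0.le]
          exact Real.rpow_le_rpow (by positivity) h hα.le
        have hNe : C₁ * ((2:ℝ)^k)^α ≤ (N:ℝ) * (C₁ * (g p)^α) := by
          have h2 := hrpow hk1'
          have h3 : (N:ℝ) * (((2:ℝ)^k)^α * θN^α) = ((2:ℝ)^k)^α := by
            calc (N:ℝ) * (((2:ℝ)^k)^α * θN^α) = ((2:ℝ)^k)^α * ((N:ℝ) * θN^α) := by ring
              _ = ((2:ℝ)^k)^α := by rw [hNθ]; ring
          have h4 := mul_le_mul_of_nonneg_left h2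
            (by positivity : (0:ℝ) ≤ (N:ℝ) * C₁)
          calc C₁ * ((2:ℝ)^k)^α
              = (N:ℝ) * C₁ * (((2:ℝ)^k)^α * θN^α) := by
                rw [show (N:ℝ) * C₁ * (((2:ℝ)^k)^α * θN^α)
                  = C₁ * ((N:ℝ) * (((2:ℝ)^k)^α * θN^α)) from by ring, h3]
            _ ≤ (N:ℝ) * C₁ * (g p)^α := h4
            _ = (N:ℝ) * (C₁ * (g p)^α) := by ring
        calc |κ (f p)| ^ N = (κ (f p))^N := by rw [habs]
          _ ≤ (1 - C₁ * (g p)^α)^N := pow_le_pow_left₀ hnn hκle N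
          _ ≤ (Real.exp (-(C₁ * (g p)^α)))^N := pow_le_pow_left₀ h1b hexp N
          _ = Real.exp ((N:ℝ) * (-(C₁ * (g p)^α))) := (Real.exp_nat_mul _ N).symm
          _ ≤ Real.exp (-(C₁ * ((2:ℝ)^k)^α)) := by
              apply Real.exp_le_exp.2
              rw [mul_neg]
              linarith
      have hb : ENNReal.ofReal (|κ (f p)| ^ N)
          ≤ ∑' j : ℕ, Set.indicator (shell j)
              (fun _ => ENNReal.ofReal (Real.exp (-(C₁ * ((2:ℝ)^j)^α)))) p := by
        refine le_trans ?_ (ENNReal.le_tsum k)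
        rw [Set.indicator_of_mem hmemsh]
        exact ENNReal.ofReal_le_ofReal hbound
      calc ENNReal.ofReal (|κ (f p)| ^ N)
          ≤ ∑' j : ℕ, Set.indicator (shell j)
              (fun _ => ENNReal.ofReal (Real.exp (-(C₁ * ((2:ℝ)^j)^α)))) p := hb
        _ ≤ Set.indicator near (fun _ => (1:ℝ≥0∞)) p
            + ∑' j : ℕ, Set.indicator (shell j)
              (fun _ => ENNReal.ofReal (Real.exp (-(C₁ * ((2:ℝ)^j)^α)))) p :=
            le_add_self
        _ ≤ _ := self_le_add_right _ _
    · -- far region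
      push_neg at hmid
      have hmemfar : p ∈ far := hmid.le
      have hfmem : f p ∈ Set.Icc (-1:ℝ) (Real.cos ε') := by
        refine Set.mem_Icc.2 ⟨(hf_mem p).1, ?_⟩
        rw [← hc p]
        exact Real.cos_le_cos_of_nonneg_of_le_pi hε'pos.le (hgπ p) hmid.le
      have hqb : |κ (f p)| ≤ q := ht₀max hfmem
      have hb : ENNReal.ofReal (|κ (f p)| ^ N)
          ≤ Set.indicator far (fun _ => ENNReal.ofReal (q^N)) p := by
        rw [Set.indicator_of_mem hmemfar]
        exact ENNReal.ofReal_le_ofReal (pow_le_pow_left₀ (abs_nonneg _) hqb N)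
      exact hb.trans (le_add_self)
  -- integrate
  have hmeas1 : Measurable (Set.indicator near (fun _ => (1:ℝ≥0∞))) :=
    measurable_const.indicator hnear_meas
  have hmeas2 : Measurable (fun p => ∑' k : ℕ, Set.indicator (shell k)
      (fun _ => ENNReal.ofReal (Real.exp (-(C₁ * ((2:ℝ)^k)^α)))) p) :=
    Measurable.ennreal_tsum (fun k => measurable_const.indicator (hshell_meas k))
  have hstep : (∫⁻ p, ENNReal.ofReal (|κ (f p)| ^ N) ∂m)
      ≤ (∫⁻ p, Set.indicator near (fun _ => (1:ℝ≥0∞)) p ∂m)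
        + (∫⁻ p, (∑' k : ℕ, Set.indicator (shell k)
            (fun _ => ENNReal.ofReal (Real.exp (-(C₁ * ((2:ℝ)^k)^α)))) p) ∂m)
        + (∫⁻ p, Set.indicator far (fun _ => ENNReal.ofReal (q^N)) p ∂m) := by
    calc (∫⁻ p, ENNReal.ofReal (|κ (f p)| ^ N) ∂m)
        ≤ ∫⁻ p, (Set.indicator near (fun _ => (1:ℝ≥0∞)) p
            + (∑' k : ℕ, Set.indicator (shell k)
              (fun _ => ENNReal.ofReal (Real.exp (-(C₁ * ((2:ℝ)^k)^α)))) p)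
            + Set.indicator far (fun _ => ENNReal.ofReal (q^N)) p) ∂m :=
          lintegral_mono hpt
      _ = _ := by
          rw [lintegral_add_right _ (measurable_const.indicator hfar_meas), lintegral_add_left hmeas1]
  -- bound each piece
  have hnear_bound : (∫⁻ p, Set.indicator near (fun _ => (1:ℝ≥0∞)) p ∂m)
      ≤ ENNReal.ofReal (Mu * (Ccap * θN^d)) := by
    rw [lintegral_indicator_const hnear_meas, one_mul]
    refine (hsec near θN hθN0 (fun p hp => hp)).trans ?_
    rw [← ENNReal.ofReal_mul hMu0]
  have hfar_bound : (∫⁻ p, Set.indicator far (fun _ => ENNReal.ofReal (q^N)) p ∂m)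
      ≤ ENNReal.ofReal (Mu^2 * D * (N:ℝ)^(-(d:ℝ)/α)) := by
    rw [lintegral_indicator_const hfar_meas]
    calc ENNReal.ofReal (q^N) * m far
        ≤ ENNReal.ofReal (q^N) * (ENNReal.ofReal Mu * ENNReal.ofReal Mu) := by
          apply mul_le_mul_right
          calc m far ≤ m Set.univ := measure_mono (Set.subset_univ _)
            _ = μs Set.univ * μs Set.univ := by
                rw [hm, ← Set.univ_prod_univ, Measure.prod_prod]
            _ ≤ ENNReal.ofReal Mu * ENNReal.ofReal Mu := mul_le_mul' hMule hMule
      _ = ENNReal.ofReal (q^N * (Mu * Mu)) := by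
          rw [ENNReal.ofReal_mul (by positivity), ENNReal.ofReal_mul hMu0]
      _ ≤ ENNReal.ofReal (Mu^2 * D * (N:ℝ)^(-(d:ℝ)/α)) := by
          apply ENNReal.ofReal_le_ofReal
          have hg2 : q ^ N ≤ D * (N:ℝ)^(-(d:ℝ)/α) := by
            rw [neg_div]; exact hgeom N hN
          nlinarith [pow_nonneg hq0 N, hMu0, hX0, hD.le, hg2]
  have hmid_bound : (∫⁻ p, (∑' k : ℕ, Set.indicator (shell k)
        (fun _ => ENNReal.ofReal (Real.exp (-(C₁ * ((2:ℝ)^k)^α)))) p) ∂m)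
      ≤ ENNReal.ofReal (Mu * Ccap * 2^(d+1) * M * θN^d) := by
    rw [lintegral_tsum (fun k => (measurable_const.indicator (hshell_meas k)).aemeasurable)]
    have hterm : ∀ k : ℕ, (∫⁻ p, Set.indicator (shell k)
          (fun _ => ENNReal.ofReal (Real.exp (-(C₁ * ((2:ℝ)^k)^α)))) p ∂m)
        ≤ ENNReal.ofReal (Mu * Ccap * 2^d * θN^d) * ENNReal.ofReal (M * (1/2:ℝ)^k) := by
      intro k
      rw [lintegral_indicator_const (hshell_meas k)]
      have hshell_sub : m (shell k)
          ≤ ENNReal.ofReal Mu * ENNReal.ofReal (Ccap * ((2:ℝ)^(k+1) * θN) ^ d) :=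
        hsec (shell k) ((2:ℝ)^(k+1) * θN) (by positivity) (fun p hp => hp.2.1)
      calc ENNReal.ofReal (Real.exp (-(C₁ * ((2:ℝ)^k)^α))) * m (shell k)
          ≤ ENNReal.ofReal (Real.exp (-(C₁ * ((2:ℝ)^k)^α)))
              * (ENNReal.ofReal Mu * ENNReal.ofReal (Ccap * ((2:ℝ)^(k+1) * θN) ^ d)) :=
            mul_le_mul_right hshell_sub _
        _ = ENNReal.ofReal (Real.exp (-(C₁ * ((2:ℝ)^k)^α))
              * (Mu * (Ccap * ((2:ℝ)^(k+1) * θN) ^ d))) := by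
            rw [ENNReal.ofReal_mul (Real.exp_nonneg _), ENNReal.ofReal_mul hMu0]
        _ = ENNReal.ofReal ((Mu * Ccap * 2^d * θN^d)
              * ((2:ℝ)^(k*d) * Real.exp (-(C₁ * ((2:ℝ)^k)^α)))) := by
            congr 1
            rw [mul_pow, ← pow_mul]
            ring_nf
        _ = ENNReal.ofReal (Mu * Ccap * 2^d * θN^d)
              * ENNReal.ofReal ((2:ℝ)^(k*d) * Real.exp (-(C₁ * ((2:ℝ)^k)^α))) := by
            rw [ENNReal.ofReal_mul (by positivity)]
        _ ≤ ENNReal.ofReal (Mu * Ccap * 2^d * θN^d) * ENNReal.ofReal (M * (1/2:ℝ)^k) := by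
            apply mul_le_mul_right
            apply ENNReal.ofReal_le_ofReal
            have h1b := mul_le_mul_of_nonneg_right (hdecay k)
              (by positivity : (0:ℝ) ≤ (1/2:ℝ)^k)
            calc (2:ℝ)^(k*d) * Real.exp (-(C₁ * ((2:ℝ)^k)^α))
                = (2:ℝ)^(k*(d+1)) * Real.exp (-(C₁ * ((2:ℝ)^k)^α)) * (1/2:ℝ)^k := by
                  rw [show k*(d+1) = k*d + k by ring, pow_add, one_div, inv_pow]
                  have h2k : ((2:ℝ)^k) ≠ 0 := by positivity
                  field_simp
              _ ≤ M * (1/2:ℝ)^k := h1b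
    calc (∑' k : ℕ, ∫⁻ p, Set.indicator (shell k)
          (fun _ => ENNReal.ofReal (Real.exp (-(C₁ * ((2:ℝ)^k)^α)))) p ∂m)
        ≤ ∑' k : ℕ, ENNReal.ofReal (Mu * Ccap * 2^d * θN^d) * ENNReal.ofReal (M * (1/2:ℝ)^k) :=
          ENNReal.tsum_le_tsum hterm
      _ = ENNReal.ofReal (Mu * Ccap * 2^d * θN^d)
            * ∑' k : ℕ, ENNReal.ofReal (M * (1/2:ℝ)^k) := ENNReal.tsum_mul_left
      _ = ENNReal.ofReal (Mu * Ccap * 2^d * θN^d)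
            * (ENNReal.ofReal M * ∑' k : ℕ, ENNReal.ofReal ((1/2:ℝ)^k)) := by
          congr 1
          rw [← ENNReal.tsum_mul_left]
          exact tsum_congr (fun k => ENNReal.ofReal_mul hM.le)
      _ = ENNReal.ofReal (Mu * Ccap * 2^d * θN^d) * (ENNReal.ofReal M * 2) := by
          congr 2
          have hh : ∀ k:ℕ, ENNReal.ofReal ((1/2:ℝ)^k) = (2⁻¹:ℝ≥0∞)^k := by
            intro k
            rw [ENNReal.ofReal_pow (by norm_num), one_div,
              ENNReal.ofReal_inv_of_pos two_pos, ENNReal.ofReal_ofNat]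
          rw [tsum_congr hh, ENNReal.tsum_geometric, ENNReal.one_sub_inv_two, inv_inv]
      _ ≤ ENNReal.ofReal (Mu * Ccap * 2^(d+1) * M * θN^d) := by
          have h2 : (2:ℝ≥0∞) = ENNReal.ofReal 2 := by norm_num
          rw [h2, ← ENNReal.ofReal_mul hM.le, ← ENNReal.ofReal_mul (by positivity)]
          apply ENNReal.ofReal_le_ofReal
          apply le_of_eq
          rw [pow_succ]
          ring
  calc (∫⁻ p : Metric.sphere (0:E) 1 × Metric.sphere (0:E) 1,
        ENNReal.ofReal (|κ (inner ℝ (p.1 : E) (p.2 : E))| ^ N) ∂m)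
      = ∫⁻ p, ENNReal.ofReal (|κ (f p)| ^ N) ∂m := rfl
    _ ≤ _ := hstep
    _ ≤ ENNReal.ofReal (Mu * (Ccap * θN^d))
        + ENNReal.ofReal (Mu * Ccap * 2^(d+1) * M * θN^d)
        + ENNReal.ofReal (Mu^2 * D * (N:ℝ)^(-(d:ℝ)/α)) :=
      add_le_add (add_le_add hnear_bound hmid_bound) hfar_bound
    _ = ENNReal.ofReal (Mu * (Ccap * θN^d) + Mu * Ccap * 2^(d+1) * M * θN^d
        + Mu^2 * D * (N:ℝ)^(-(d:ℝ)/α)) := by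
      rw [← ENNReal.ofReal_add (by positivity) (by positivity),
        ← ENNReal.ofReal_add (by positivity) (by positivity)]
    _ ≤ ENNReal.ofReal ((Mu*Ccap + Mu*Ccap*2^(d+1)*M + Mu^2*D + 1) * (N:ℝ)^(-(d:ℝ)/α)) := by
      apply ENNReal.ofReal_le_ofReal
      rw [hθNd]
      ring_nf
      nlinarith [Real.rpow_nonneg hN0.le (-((d:ℝ) * α⁻¹))]
end
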